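/- If z is a type-2 approximation of Prox^D_{τh}(y) with precision ε (that is, (1/τ)D(y − z) ∈ ∂_ε h(z)), then z is a type-1 approximation of Prox^D_{τh}(y) with precision ε; that is, G_y(x) ≥ G_y(z) − ε for all x ∈ ℝ^d. -/

import Mathlib

open Matrix

/-- squared M-norm: ⟨x, M x⟩ -/
noncomputable def sqnorm {d : ℕ} (M : Matrix (Fin d) (Fin d) ℝ) (x : Fin d → ℝ) : ℝ :=
  x ⬝ᵥ M.mulVec x

/-- If z is a type-2 approximation of Prox^D_{τh}(y) with precision ε, i.e.
(1/τ)D(y − z) ∈ ∂_ε h(z), then z is a type-1 approximation: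
G_y(x) ≥ G_y(z) − ε for all x. -/
theorem type2_implies_type1 {d : ℕ}
    (D : Matrix (Fin d) (Fin d) ℝ) (hD : D.PosDef)
    (τ : ℝ) (hτ : 0 < τ)
    (h : (Fin d → ℝ) → ℝ) (hconv : ConvexOn ℝ Set.univ h)
    (y : Fin d → ℝ) (ε : ℝ) (hε : 0 ≤ ε)
    (z : Fin d → ℝ)
    (htype2 : ∀ x, h x ≥ h z + ((1 / τ) • D.mulVec (y - z)) ⬝ᵥ (x - z) - ε) :
    ∀ x, h x + (1 / (2 * τ)) * sqnorm D (x - y)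
        ≥ h z + (1 / (2 * τ)) * sqnorm D (z - y) - ε := by
  intro x
  have hsym : ∀ a b : Fin d → ℝ, a ⬝ᵥ D.mulVec b = b ⬝ᵥ D.mulVec a := by
    intro a b
    simp only [dotProduct, mulVec, dotProduct, Finset.mul_sum, Finset.sum_mul]
    rw [Finset.sum_comm]
    apply Finset.sum_congr rfl; intro i _
    apply Finset.sum_congr rfl; intro j _
    have : D i j = D j i := by
      have := congrFun (congrFun hD.isHermitian j) i
      simpa [Matrix.conjTranspose_apply] using this
    rw [this]; ring
  have key : sqnorm D (x - y)
      = sqnorm D (x - z) - 2 * (D.mulVec (y - z) ⬝ᵥ (x - z)) + sqnorm D (z - y) := by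
    rw [dotProduct_comm (D.mulVec (y - z))]
    have hx : x - y = (x - z) + (z - y) := by abel
    rw [hx]
    simp only [sqnorm, Matrix.mulVec_add, dotProduct_add, add_dotProduct,
      Matrix.mulVec_sub, dotProduct_sub, sub_dotProduct]
    have h1 := hsym x y
    have h2 := hsym x z
    have h3 := hsym y z
    linarith
  have hpos : 0 ≤ sqnorm D (x - z) := by
    have := hD.posSemidef.dotProduct_mulVec_nonneg (x - z)
    simpa [sqnorm] using this
  have ht := htype2 x
  rw [smul_dotProduct, smul_eq_mul] at ht
  have h2τ : 0 < 2 * τ := by linarith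
  rw [key]
  have hge : (1 / (2 * τ)) * sqnorm D (x - z) ≥ 0 := by positivity
  have hteq : (1 / (2 * τ)) * (2 * (D.mulVec (y - z) ⬝ᵥ (x - z)))
      = (1 / τ) * (D.mulVec (y - z) ⬝ᵥ (x - z)) := by
    field_simp
  nlinarith [ht, hge, hteq]
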